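/- Let S be a dominating set of the m×n king graph. Partition the board into blocks B_{i,j} = {2i−1, 2i} × {2j−1, 2j} (truncated at the boundary when m or n is odd), ordered lexicographically by (j, i). If in every block the only element of S (if any) is the top-left corner (the unique vertex of the block with both coordinates odd), then every block's top-left corner lies in S; that is, S equals the set of all vertices with both coordinates odd. -/

import Mathlib

/-- The `m × n` king graph: vertices are squares of an `m × n` board
(vertex `p` represents board square `(p.1.val + 1, p.2.val + 1)`), with
`p` adjacent to `q` iff `p ≠ q` and `max |x−x'| |y−y'| = 1`. -/
def kingGraph (m n : ℕ) : SimpleGraph (Fin m × Fin n) where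
  Adj p q := p ≠ q ∧
    max ((p.1.val : ℤ) - q.1.val).natAbs ((p.2.val : ℤ) - q.2.val).natAbs = 1
  symm := by
    constructor
    intro p q ⟨h1, h2⟩
    refine ⟨h1.symm, ?_⟩
    rw [show ((q.1.val : ℤ) - p.1.val) = -((p.1.val : ℤ) - q.1.val) by ring,
      show ((q.2.val : ℤ) - p.2.val) = -((p.2.val : ℤ) - q.2.val) by ring,
      Int.natAbs_neg, Int.natAbs_neg]
    exact h2
  loopless := by constructor; intro p ⟨h1, _⟩; exact h1 rfl

instance (m n : ℕ) : DecidableRel (kingGraph m n).Adj :=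
  fun p q => decidable_of_iff (p ≠ q ∧
    max ((p.1.val : ℤ) - q.1.val).natAbs ((p.2.val : ℤ) - q.2.val).natAbs = 1) Iff.rfl

/-- `S` is a dominating set: every vertex is in `S` or adjacent to a member of `S`. -/
def IsDomSet {V : Type*} (G : SimpleGraph V) (S : Finset V) : Prop :=
  ∀ v, v ∈ S ∨ ∃ u ∈ S, G.Adj u v

instance {V : Type*} [Fintype V] [DecidableEq V] (G : SimpleGraph V)
    [DecidableRel G.Adj] : DecidablePred (IsDomSet G) :=
  fun _ => inferInstanceAs (Decidable (∀ _, _ ∨ _))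


/- Board coordinates of a vertex `p` are `(p.1.val + 1, p.2.val + 1)`; thus `p` is
the top-left corner of its `2 × 2` block iff both board coordinates are odd, i.e.
iff `p.1.val` and `p.2.val` are both even.  The (0-based) block index of `p` is
`(p.1.val / 2, p.2.val / 2)`, and the scan order (left-to-right, then
top-to-bottom) is lexicographic in `(p.2.val / 2, p.1.val / 2)`. -/

/-- If a dominating set `S` of the `m × n` king graph contains, in every block, no
element other than the block's top-left corner, then `S` is exactly the set of all
top-left corners, i.e. all vertices with both board coordinates odd. -/
theorem king_all_corners_of_only_corners (m n : ℕ) (S : Finset (Fin m × Fin n))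
    (hS : IsDomSet (kingGraph m n) S)
    (hcorner : ∀ p ∈ S, Even p.1.val ∧ Even p.2.val) :
    S = Finset.univ.filter (fun p : Fin m × Fin n =>
      Even p.1.val ∧ Even p.2.val) := by
  ext p
  simp only [Finset.mem_filter, Finset.mem_univ, true_and]
  constructor
  · exact hcorner p
  · rintro ⟨h1, h2⟩
    rcases hS p with hp | ⟨u, huS, hne, hadj⟩
    · exact hp
    · exfalso
      obtain ⟨e1, e2⟩ := hcorner u huS
      have d1 : Even ((u.1.val : ℤ) - p.1.val).natAbs := by
        rw [Int.natAbs_even]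
        exact (Int.even_coe_nat _ |>.mpr e1).sub (Int.even_coe_nat _ |>.mpr h1)
      have d2 : Even ((u.2.val : ℤ) - p.2.val).natAbs := by
        rw [Int.natAbs_even]
        exact (Int.even_coe_nat _ |>.mpr e2).sub (Int.even_coe_nat _ |>.mpr h2)
      have : Even (max ((u.1.val : ℤ) - p.1.val).natAbs
          ((u.2.val : ℤ) - p.2.val).natAbs) := by
        rcases max_cases ((u.1.val : ℤ) - p.1.val).natAbs
            ((u.2.val : ℤ) - p.2.val).natAbs with ⟨h, _⟩ | ⟨h, _⟩ <;>
          rw [h] <;> assumption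
      rw [hadj] at this
      exact (Nat.not_even_iff_odd.mpr odd_one) this
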